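/- arXiv:0903.4310 — 5 statements merged into one kernel-verified Lean document; each statement's English description precedes it below -/
import Mathlib

section
/- Let k be a field, let M be an affine semigroup in ℤ^n, and let F be a face of M. Then the ideal p_F of k[M] generated by the monomials t^a with a ∈ M \ F is a prime ideal, and the quotient ring k[M]/p_F is isomorphic as a k-algebra to the semigroup ring k[F] of the face F. -/
/-- `F` is a face of the affine semigroup `M ⊆ ℤⁿ`: an additive submonoid of `M` such that
`a + b ∈ F` with `a, b ∈ M` forces `a ∈ F` and `b ∈ F`. -/
def IsFace {n : ℕ} (M F : AddSubmonoid (Fin n → ℤ)) : Prop :=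
  F ≤ M ∧ ∀ a ∈ M, ∀ b ∈ M, a + b ∈ F → a ∈ F ∧ b ∈ F

/-- The ideal `p_F` of `k[M]` generated by the monomials `t^a` with `a ∈ M \ F`. -/
noncomputable def facePrime (k : Type*) [Field k] {n : ℕ} (M F : AddSubmonoid (Fin n → ℤ)) :
    Ideal (AddMonoidAlgebra k M) :=
  Ideal.span {x | ∃ a : M, (a : Fin n → ℤ) ∉ F ∧ x = AddMonoidAlgebra.of' k M a}

theorem facePrime_isPrime_and_quotient_iso
    (k : Type*) [Field k] (n : ℕ) (hn : 1 ≤ n)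
    (M : AddSubmonoid (Fin n → ℤ)) (hM : M.FG)
    (F : AddSubmonoid (Fin n → ℤ)) (hF : IsFace M F) :
    (facePrime k M F).IsPrime ∧
      Nonempty ((AddMonoidAlgebra k M ⧸ facePrime k M F) ≃ₐ[k] AddMonoidAlgebra k F) := by
  classical
  obtain ⟨hFM, hface⟩ := hF
  -- the projection on the monoid level
  set g : M → AddMonoidAlgebra k F := fun a =>
    if h : (a : Fin n → ℤ) ∈ F then AddMonoidAlgebra.of' k F ⟨(a : Fin n → ℤ), h⟩ else 0 with hg
  have hg0 : g 0 = 1 := by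
    simp only [hg, AddSubmonoid.coe_zero]
    rw [dif_pos F.zero_mem]
    simp only [AddMonoidAlgebra.of'_apply, AddMonoidAlgebra.one_def]
    exact congrArg (fun z => AddMonoidAlgebra.single z (1 : k)) (Subtype.ext rfl)
  have hgadd : ∀ a b : M, g (a + b) = g a * g b := by
    intro a b
    by_cases hab : ((a : Fin n → ℤ) + (b : Fin n → ℤ)) ∈ F
    · obtain ⟨ha, hb⟩ := hface a a.2 b b.2 hab
      simp only [hg, AddSubmonoid.coe_add]
      rw [dif_pos hab, dif_pos ha, dif_pos hb]
      simp only [AddMonoidAlgebra.of'_apply]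
      rw [AddMonoidAlgebra.single_mul_single, one_mul]
      rfl
    · have hnot : ¬((a : Fin n → ℤ) ∈ F ∧ (b : Fin n → ℤ) ∈ F) := by
        rintro ⟨ha, hb⟩; exact hab (F.add_mem ha hb)
      simp only [hg, AddSubmonoid.coe_add]
      rw [dif_neg hab]
      by_cases ha : (a : Fin n → ℤ) ∈ F
      · rw [dif_pos ha, dif_neg (fun hb => hnot ⟨ha, hb⟩), mul_zero]
      · rw [dif_neg ha, zero_mul]
  let f : Multiplicative M →* AddMonoidAlgebra k F :=
    { toFun := fun a => g a.toAdd
      map_one' := hg0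
      map_mul' := fun a b => hgadd a.toAdd b.toAdd }
  let π : AddMonoidAlgebra k M →ₐ[k] AddMonoidAlgebra k F :=
    AddMonoidAlgebra.lift k (AddMonoidAlgebra k F) M f
  have hπof' : ∀ a : M, π (AddMonoidAlgebra.of' k M a) = g a := fun a =>
    AddMonoidAlgebra.lift_of' f a
  -- coefficient computation
  have hcoeff : ∀ (x : AddMonoidAlgebra k M) (b : F),
      (π x).coeff b = x.coeff ⟨(b : Fin n → ℤ), hFM b.2⟩ := by
    intro x
    induction x using AddMonoidAlgebra.induction_linear with
    | zero => intro b; simp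
    | add p q hp hq => intro b; rw [map_add, AddMonoidAlgebra.coeff_add, AddMonoidAlgebra.coeff_add,
        Finsupp.add_apply, Finsupp.add_apply, hp, hq]
    | single a c =>
      intro b
      have hsm : (AddMonoidAlgebra.single a c : AddMonoidAlgebra k M)
          = c • AddMonoidAlgebra.of' k M a := by
        rw [AddMonoidAlgebra.of'_apply, AddMonoidAlgebra.smul_single', mul_one]
      rw [hsm, map_smul, hπof']
      simp only [hg]
      by_cases ha : (a : Fin n → ℤ) ∈ F
      · rw [dif_pos ha]
        simp only [AddMonoidAlgebra.of'_apply, AddMonoidAlgebra.smul_single', mul_one]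
        rw [AddMonoidAlgebra.coeff_single_apply, AddMonoidAlgebra.coeff_single_apply]
        by_cases hab : (a : Fin n → ℤ) = (b : Fin n → ℤ)
        · rw [if_pos (show (⟨(a : Fin n → ℤ), ha⟩ : F) = b from Subtype.ext hab),
            if_pos (show a = (⟨(b : Fin n → ℤ), hFM b.2⟩ : M) from Subtype.ext hab)]
        · rw [if_neg (fun h : (⟨(a : Fin n → ℤ), ha⟩ : F) = b => hab (congrArg Subtype.val h)),
            if_neg (fun h : a = ⟨(b : Fin n → ℤ), hFM b.2⟩ => hab (congrArg Subtype.val h))]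
      · rw [dif_neg ha]
        simp only [AddMonoidAlgebra.of'_apply, AddMonoidAlgebra.smul_single', mul_one,
          smul_zero]
        rw [AddMonoidAlgebra.coeff_single_apply,
          if_neg (fun h : a = ⟨(b : Fin n → ℤ), hFM b.2⟩ => ha (by
            rw [show (a : Fin n → ℤ) = (b : Fin n → ℤ) from congrArg Subtype.val h]
            exact b.2))]
        simp
  -- surjectivity
  have hsurj : Function.Surjective π := by
    intro y
    set e : F → M := fun c => ⟨(c : Fin n → ℤ), hFM c.2⟩ with he
    have hei : Function.Injective e := by
      intro c d h
      have h2 : (e c : Fin n → ℤ) = e d := congrArg Subtype.val h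
      exact Subtype.ext h2
    refine ⟨AddMonoidAlgebra.mapDomain e y, ?_⟩
    ext b
    rw [hcoeff]
    exact Finsupp.mapDomain_apply hei y.coeff b
  -- kernel computation
  have hker : RingHom.ker π = facePrime k M F := by
    apply le_antisymm
    · intro x hx
      have hx0 : π x = 0 := hx
      have hcoeffs : ∀ a : M, (a : Fin n → ℤ) ∈ F → x.coeff a = 0 := by
        intro a ha
        have := hcoeff x ⟨(a : Fin n → ℤ), ha⟩
        rw [hx0] at this
        simpa using this.symm
      have hxsum : x = ∑ a ∈ x.coeff.support, AddMonoidAlgebra.single a (x.coeff a) :=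
        (AddMonoidAlgebra.sum_coeff_single x).symm
      rw [hxsum]
      apply Ideal.sum_mem
      intro a haS
      have haF : (a : Fin n → ℤ) ∉ F := fun h =>
        Finsupp.mem_support_iff.mp haS (hcoeffs a h)
      have hgen : AddMonoidAlgebra.of' k M a ∈ facePrime k M F :=
        Ideal.subset_span ⟨a, haF, rfl⟩
      have h1 : (AddMonoidAlgebra.single a (x.coeff a) : AddMonoidAlgebra k M)
          = AddMonoidAlgebra.single 0 (x.coeff a) * AddMonoidAlgebra.of' k M a := by
        rw [AddMonoidAlgebra.of'_apply, AddMonoidAlgebra.single_mul_single, zero_add, mul_one]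
      rw [h1]
      exact Ideal.mul_mem_left _ _ hgen
    · rw [facePrime, Ideal.span_le]
      rintro x ⟨a, haF, rfl⟩
      have : π (AddMonoidAlgebra.of' k M a) = 0 := by
        rw [hπof']
        simp only [hg]
        rw [dif_neg haF]
      exact this
  haveI : UniqueSums F :=
    UniqueSums.of_injective_addHom F.subtype.toAddHom Subtype.coe_injective inferInstance
  haveI : NoZeroDivisors (AddMonoidAlgebra k F) := inferInstance
  haveI : IsDomain (AddMonoidAlgebra k F) := NoZeroDivisors.to_isDomain _
  constructor
  · rw [← hker]
    exact RingHom.ker_isPrime π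
  · rw [← hker]
    exact ⟨Ideal.quotientKerAlgEquivOfSurjective hsurj⟩
end

section
/- Let k be a field and M an affine semigroup in ℤ^n. Every prime ideal of k[M] that is generated by a set of monomials t^a (a ∈ M) is equal to p_F for a unique face F of M. -/
lemma of'_mul_of' {k : Type*} [Field k] {n : ℕ} {M : AddSubmonoid (Fin n → ℤ)} (a b : M) :
    AddMonoidAlgebra.of' k M a * AddMonoidAlgebra.of' k M b
      = AddMonoidAlgebra.of' k M (a + b) := by
  simp [AddMonoidAlgebra.of'_apply, AddMonoidAlgebra.single_mul_single]

/-- The "monomials avoiding a face" ideal, used to test membership. -/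
def faceIdeal (k : Type*) [Field k] {n : ℕ} (M F : AddSubmonoid (Fin n → ℤ))
    (hF : IsFace M F) : Ideal (AddMonoidAlgebra k M) where
  carrier := {x | ∀ m ∈ x.coeff.support, (m : Fin n → ℤ) ∉ F}
  zero_mem' := by simp
  add_mem' := by
    intro x y hx hy m hm
    rcases Finset.mem_union.mp (Finsupp.support_add hm) with h | h
    exacts [hx m h, hy m h]
  smul_mem' := by
    classical
    intro c x hx m hm
    rw [smul_eq_mul] at hm
    obtain ⟨a, ha, b, hb, rfl⟩ := Finset.mem_add.mp (AddMonoidAlgebra.support_coeff_mul_subset c x hm)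
    intro hab
    exact hx b hb (hF.2 (a : Fin n → ℤ) a.2 (b : Fin n → ℤ) b.2
      (by rwa [AddSubmonoid.coe_add] at hab)).2

lemma of'_mem_facePrime_iff {k : Type*} [Field k] {n : ℕ} {M F : AddSubmonoid (Fin n → ℤ)}
    (hF : IsFace M F) (a : M) :
    AddMonoidAlgebra.of' k M a ∈ facePrime k M F ↔ (a : Fin n → ℤ) ∉ F := by
  constructor
  · intro h
    have hle : facePrime k M F ≤ faceIdeal k M F hF := by
      rw [facePrime, Ideal.span_le]
      rintro _ ⟨b, hb, rfl⟩ m hm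
      have : m = b := Finset.mem_singleton.mp (Finsupp.support_single_subset (a := b) (b := (1 : k)) hm)
      rwa [this]
    exact hle h a (by
      simp [AddMonoidAlgebra.of'_apply, AddMonoidAlgebra.coeff_single, Finsupp.support_single_ne_zero a (one_ne_zero (α := k))])
  · intro ha
    exact Ideal.subset_span ⟨a, ha, rfl⟩

/-- Every monomial prime of `k[M]` is `p_F` for a unique face `F` of `M`. -/
theorem monomial_prime_eq_facePrime
    (k : Type*) [Field k] (n : ℕ) (hn : 1 ≤ n)
    (M : AddSubmonoid (Fin n → ℤ)) (hM : M.FG)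
    (p : Ideal (AddMonoidAlgebra k M)) (hp : p.IsPrime)
    (S : Set M) (hgen : p = Ideal.span ((fun a : M => AddMonoidAlgebra.of' k M a) '' S)) :
    ∃! F : AddSubmonoid (Fin n → ℤ), IsFace M F ∧ p = facePrime k M F := by
  classical
  have h1 : AddMonoidAlgebra.of' k M 0 ∉ p := by
    have : AddMonoidAlgebra.of' k M 0 = 1 := by
      simp [AddMonoidAlgebra.of'_apply, AddMonoidAlgebra.one_def]
    rw [this]
    exact fun h => hp.ne_top ((Ideal.eq_top_iff_one p).mpr h)
  set F : AddSubmonoid (Fin n → ℤ) :=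
    { carrier := {v | ∃ a : M, (a : Fin n → ℤ) = v ∧ AddMonoidAlgebra.of' k M a ∉ p}
      zero_mem' := ⟨0, rfl, h1⟩
      add_mem' := by
        rintro v w ⟨a, rfl, ha⟩ ⟨b, rfl, hb⟩
        refine ⟨a + b, rfl, fun h => ?_⟩
        rw [← of'_mul_of'] at h
        rcases hp.mem_or_mem h with h' | h'
        exacts [ha h', hb h'] } with hFdef
  have hmemF : ∀ v, v ∈ F ↔ ∃ a : M, (a : Fin n → ℤ) = v ∧ AddMonoidAlgebra.of' k M a ∉ p :=
    fun v => Iff.rfl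
  have hface : IsFace M F := by
    constructor
    · rintro v ⟨a, rfl, _⟩; exact a.2
    · rintro a ha b hb ⟨c, hc, hcp⟩
      have hab : (⟨a, ha⟩ : M) + ⟨b, hb⟩ = c := by
        apply Subtype.ext; simpa using hc.symm
      rw [← hab, ← of'_mul_of'] at hcp
      constructor
      · exact ⟨⟨a, ha⟩, rfl, fun h => hcp (Ideal.mul_mem_right _ _ h)⟩
      · exact ⟨⟨b, hb⟩, rfl, fun h => hcp (Ideal.mul_mem_left _ _ h)⟩
  have hpF : p = facePrime k M F := by
    apply le_antisymm
    · conv_lhs => rw [hgen]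
      rw [Ideal.span_le]
      rintro _ ⟨s, hs, rfl⟩
      have hsp : AddMonoidAlgebra.of' k M s ∈ p := by
        rw [hgen]; exact Ideal.subset_span ⟨s, hs, rfl⟩
      refine Ideal.subset_span ⟨s, ?_, rfl⟩
      rintro ⟨b, hb, hbp⟩
      exact hbp (by rwa [Subtype.ext hb])
    · rw [facePrime, Ideal.span_le]
      rintro _ ⟨a, ha, rfl⟩
      by_contra h
      exact ha ⟨a, rfl, h⟩
  refine ⟨F, ⟨hface, hpF⟩, ?_⟩
  rintro F' ⟨hface', hpF'⟩
  ext v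
  rw [hmemF]
  constructor
  · intro hv
    have hvM : v ∈ M := hface'.1 hv
    refine ⟨⟨v, hvM⟩, rfl, fun h => ?_⟩
    rw [hpF'] at h
    exact (of'_mem_facePrime_iff hface' ⟨v, hvM⟩).mp h hv
  · rintro ⟨a, rfl, hap⟩
    by_contra h
    exact hap (hpF' ▸ (of'_mem_facePrime_iff hface' a).mpr h)
end

section
/- Let k be a field, M an affine semigroup in ℤ^n, and F a face of M. Let T_F be the multiplicative subset {t^a : a ∈ F} of k[M]. Then M − F := {a − b : a ∈ M, b ∈ F} is an additive submonoid of ℤ^n, and the localization T_F^{-1} k[M] is isomorphic as a k-algebra to the semigroup ring k[M − F]. -/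
/-- The multiplicative set `T_F = {t^a : a ∈ F}` of monomials of `k[M]` with exponent in `F`. -/
noncomputable def faceMonomials (k : Type*) [Field k] {n : ℕ}
    (M F : AddSubmonoid (Fin n → ℤ)) : Submonoid (AddMonoidAlgebra k M) where
  carrier := {x | ∃ a : M, (a : Fin n → ℤ) ∈ F ∧ x = AddMonoidAlgebra.of' k M a}
  one_mem' := ⟨0, by simpa using F.zero_mem, by
    simp [AddMonoidAlgebra.of'_apply, AddMonoidAlgebra.one_def]⟩
  mul_mem' := by
    rintro x y ⟨a, ha, rfl⟩ ⟨b, hb, rfl⟩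
    exact ⟨a + b, by push_cast; exact F.add_mem ha hb, by
      simp [AddMonoidAlgebra.of'_apply, AddMonoidAlgebra.single_mul_single]⟩

/-- The difference submonoid `M - F`. -/
def diffSubmonoid {n : ℕ} (M F : AddSubmonoid (Fin n → ℤ)) : AddSubmonoid (Fin n → ℤ) where
  carrier := {c | ∃ a ∈ M, ∃ b ∈ F, c = a - b}
  zero_mem' := ⟨0, M.zero_mem, 0, F.zero_mem, by simp⟩
  add_mem' := by
    rintro x y ⟨a, ha, b, hb, rfl⟩ ⟨a', ha', b', hb', rfl⟩
    exact ⟨a + a', M.add_mem ha ha', b + b', F.add_mem hb hb', by abel⟩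

/-- Inclusion of `M` into `M - F`. -/
def inclDiff {n : ℕ} (M F : AddSubmonoid (Fin n → ℤ)) : M →+ diffSubmonoid M F where
  toFun a := ⟨a, a, a.2, 0, F.zero_mem, by simp⟩
  map_zero' := rfl
  map_add' a b := rfl

theorem inclDiff_injective {n : ℕ} (M F : AddSubmonoid (Fin n → ℤ)) :
    Function.Injective (inclDiff M F) :=
  fun a b hab => by
    have h := congrArg Subtype.val hab
    exact Subtype.ext h

/-- The localization `T_F⁻¹ k[M]` is isomorphic as a `k`-algebra to the semigroup ring of the
submonoid `M - F = {a - b : a ∈ M, b ∈ F}` of `ℤⁿ`. -/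
theorem localization_at_face_monomials
    (k : Type*) [Field k] (n : ℕ) (hn : 1 ≤ n)
    (M : AddSubmonoid (Fin n → ℤ)) (hM : M.FG)
    (F : AddSubmonoid (Fin n → ℤ)) (hF : IsFace M F) :
    ∃ N : AddSubmonoid (Fin n → ℤ),
      (N : Set (Fin n → ℤ)) = {c | ∃ a ∈ M, ∃ b ∈ F, c = a - b} ∧
      Nonempty (Localization (faceMonomials k M F) ≃ₐ[k] AddMonoidAlgebra k N) := by
  classical
  refine ⟨diffSubmonoid M F, rfl, ?_⟩
  set N := diffSubmonoid M F with hN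
  set T := faceMonomials k M F with hT
  set φ : AddMonoidAlgebra k M →ₐ[k] AddMonoidAlgebra k N :=
    AddMonoidAlgebra.mapDomainAlgHom k k (inclDiff M F) with hφdef
  letI : Algebra (AddMonoidAlgebra k M) (AddMonoidAlgebra k N) := φ.toRingHom.toAlgebra
  haveI : IsScalarTower k (AddMonoidAlgebra k M) (AddMonoidAlgebra k N) :=
    IsScalarTower.of_algebraMap_eq fun c => (φ.commutes c).symm
  have hφ : ∀ x, algebraMap (AddMonoidAlgebra k M) (AddMonoidAlgebra k N) x = φ x :=
    fun _ => rfl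
  have hφmd : ∀ x, φ x = AddMonoidAlgebra.mapDomain (inclDiff M F) x := fun x => by
    simp [hφdef]
  have hsingle : ∀ (a : M) (c : k),
      φ (AddMonoidAlgebra.single a c) = AddMonoidAlgebra.single (inclDiff M F a) c := by
    intro a c
    rw [hφmd, AddMonoidAlgebra.mapDomain_single]
  haveI : IsLocalization T (AddMonoidAlgebra k N) := by
    refine ⟨⟨?_, ?_, ?_⟩⟩
    · rintro ⟨y, a, ha, rfl⟩
      have hneg : -(a : Fin n → ℤ) ∈ N := ⟨0, M.zero_mem, a, ha, by simp⟩
      have hsum : inclDiff M F a + (⟨-(a : Fin n → ℤ), hneg⟩ : N) = 0 := by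
        apply Subtype.ext
        simp [inclDiff]
      refine IsUnit.of_mul_eq_one (AddMonoidAlgebra.single (⟨-(a : Fin n → ℤ), hneg⟩ : N) (1 : k)) ?_
      rw [hφ]
      simp only [AddMonoidAlgebra.of'_apply, hsingle]
      rw [AddMonoidAlgebra.single_mul_single, hsum, one_mul]
      exact AddMonoidAlgebra.one_def.symm
    · intro z
      induction z using AddMonoidAlgebra.induction with
      | zero => exact ⟨(0, 1), by simp⟩
      | single_add d c f hdf hc ih =>
        obtain ⟨⟨x, s⟩, hx⟩ := ih
        obtain ⟨a, ha, b, hb, hdv⟩ := d.2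
        have hbM : b ∈ M := hF.1 hb
        have hs' : AddMonoidAlgebra.of' k M ⟨b, hbM⟩ ∈ T := ⟨⟨b, hbM⟩, hb, rfl⟩
        set s' : T := ⟨AddMonoidAlgebra.of' k M ⟨b, hbM⟩, hs'⟩ with hs'def
        have hdb : d + inclDiff M F ⟨b, hbM⟩ = inclDiff M F ⟨a, ha⟩ := by
          apply Subtype.ext
          show (d : Fin n → ℤ) + b = a
          rw [hdv]; abel
        have key : AddMonoidAlgebra.single d c * φ ↑s' = φ (AddMonoidAlgebra.single (⟨a, ha⟩ : M) c) := by
          rw [hs'def]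
          simp only [AddMonoidAlgebra.of'_apply, hsingle]
          rw [AddMonoidAlgebra.single_mul_single, hdb, mul_one]
        refine ⟨(AddMonoidAlgebra.single (⟨a, ha⟩ : M) c * ↑s + x * ↑s', s' * s), ?_⟩
        simp only [hφ] at hx ⊢
        rw [Submonoid.coe_mul, map_mul, map_add, map_mul, map_mul, ← hx, ← key]
        ring
    · intro x y h
      refine ⟨1, ?_⟩
      simp only [hφ, hφmd] at h
      rw [AddMonoidAlgebra.mapDomain_injective (inclDiff_injective M F) h]
  exact ⟨(IsLocalization.algEquiv T (Localization T)
    (AddMonoidAlgebra k N)).restrictScalars k⟩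
end

section
/- Let k be a field, M an affine semigroup in ℤ^n with ℤM = ℤ^n, and N a nonzero finitely generated k[M]-module equipped with a ℤ^n-grading N = ⊕_{c ∈ ℤ^n} N_c (a direct sum decomposition into k-subspaces) such that t^a · N_c ⊆ N_{a+c} for all a ∈ M and c ∈ ℤ^n. Then every associated prime of N is equal to p_F for some face F of M. -/
open AddMonoidAlgebra DirectSum Finset

noncomputable instance lexGroupAux {n : ℕ} : LinearOrder (Lex (Fin n → ℤ)) :=
  inferInstance

noncomputable instance (priority := 2000) lexLinAux {n : ℕ} : LinearOrder (Lex (Fin n → ℤ)) :=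
  lexGroupAux

section Aux

variable {k : Type*} [Field k] {n : ℕ}
  {M : AddSubmonoid (Fin n → ℤ)}
  {N : Type*} [AddCommGroup N] [Module (AddMonoidAlgebra k M) N]
  [Module k N] [IsScalarTower k (AddMonoidAlgebra k M) N]
  {D : (Fin n → ℤ) → Submodule k N}
  [∀ (c : Fin n → ℤ) (y : D c), Decidable (y ≠ 0)]
  (hint : DirectSum.IsInternal D)

/-- The decomposition equivalence. -/
noncomputable def decE : N ≃ₗ[k] ⨁ c, D c :=
  (LinearEquiv.ofBijective (DirectSum.coeLinearMap D) hint).symm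

lemma decE_coe {j : Fin n → ℤ} (y : D j) :
    decE hint (y : N) = DirectSum.of (fun c => D c) j y := by
  rw [decE, LinearEquiv.symm_apply_eq]
  exact (DirectSum.coeLinearMap_of ..).symm

lemma sum_decE (x : N) :
    ∑ c ∈ (decE hint x).support, ((decE hint x c : D c) : N) = x := by
  conv_rhs => rw [← (LinearEquiv.ofBijective (DirectSum.coeLinearMap D) hint).apply_symm_apply x]
  show _ = (LinearEquiv.ofBijective (DirectSum.coeLinearMap D) hint).toLinearMap (decE hint x)
  conv_rhs => rw [← DirectSum.sum_support_of (decE hint x)]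
  rw [map_sum]
  exact Finset.sum_congr rfl fun c _ => by
    show _ = (LinearEquiv.ofBijective (DirectSum.coeLinearMap D) hint) _
    exact (DirectSum.coeLinearMap_of ..).symm


lemma decE_of'_smul_apply
    (hgr : ∀ (a : M) (c : Fin n → ℤ), ∀ x ∈ D c,
      (AddMonoidAlgebra.of' k M a) • x ∈ D ((a : Fin n → ℤ) + c)) (a : M) (x : N) (c : Fin n → ℤ) :
    ((decE hint (of' k M a • x) ((a : Fin n → ℤ) + c) : D _) : N)
      = of' k M a • ((decE hint x c : D c) : N) := by
  classical
  have hsum : of' k M a • x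
      = ∑ c' ∈ (decE hint x).support, of' k M a • ((decE hint x c' : D c') : N) := by
    rw [← Finset.smul_sum, sum_decE]
  have hdec : decE hint (of' k M a • x) = ∑ c' ∈ (decE hint x).support,
      DirectSum.of (fun c => D c) ((a : Fin n → ℤ) + c')
        ⟨of' k M a • ((decE hint x c' : D c') : N), hgr a c' _ (decE hint x c').2⟩ := by
    rw [hsum, map_sum]
    exact Finset.sum_congr rfl fun c' _ =>
      decE_coe hint (⟨of' k M a • ((decE hint x c' : D c') : N), hgr a c' _ (decE hint x c').2⟩
        : D ((a : Fin n → ℤ) + c'))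
  have key : ((decE hint (of' k M a • x) ((a : Fin n → ℤ) + c) : D _) : N)
      = ∑ c' ∈ (decE hint x).support,
        ((DirectSum.of (fun c => D c) ((a : Fin n → ℤ) + c')
          ⟨of' k M a • ((decE hint x c' : D c') : N), hgr a c' _ (decE hint x c').2⟩
            ((a : Fin n → ℤ) + c) : D _) : N) := by
    rw [hdec, DFinsupp.finset_sum_apply, AddSubmonoidClass.coe_finset_sum]
  by_cases hc : c ∈ (decE hint x).support
  · rw [key, Finset.sum_eq_single_of_mem c hc]
    · rw [DirectSum.of_eq_same]
    · intro c' _ hne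
      rw [DirectSum.of_eq_of_ne]
      · simp
      · exact fun h => hne (by simpa using (add_left_cancel h).symm)
  · rw [key, Finset.sum_eq_zero, DFinsupp.notMem_support_iff.mp hc]
    · simp
    · intro c' hc'
      rw [DirectSum.of_eq_of_ne]
      · simp
      · exact fun h => hc (by simpa [add_left_cancel h] using hc')

lemma decE_of'_smul_apply'
    (hgr : ∀ (a : M) (c : Fin n → ℤ), ∀ x ∈ D c,
      (AddMonoidAlgebra.of' k M a) • x ∈ D ((a : Fin n → ℤ) + c)) (a : M) (x : N) (d : Fin n → ℤ) :
    ((decE hint (of' k M a • x) d : D d) : N)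
      = of' k M a • ((decE hint x (d - (a : Fin n → ℤ)) : D _) : N) := by
  have h := decE_of'_smul_apply hint hgr a x (d - (a : Fin n → ℤ))
  rwa [show (a : Fin n → ℤ) + (d - (a : Fin n → ℤ)) = d by abel] at h


lemma smul_expand (f : AddMonoidAlgebra k M) (x : N) :
    f • x = ∑ b ∈ f.coeff.support, f.coeff b • (of' k M b • x) := by
  have h0 : f = ∑ b ∈ f.coeff.support, AddMonoidAlgebra.single b (f.coeff b) :=
    (AddMonoidAlgebra.sum_coeff_single f).symm
  conv_lhs => rw [h0]
  rw [Finset.sum_smul]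
  refine Finset.sum_congr rfl fun b _ => ?_
  have h1 : (AddMonoidAlgebra.single b (f.coeff b) : AddMonoidAlgebra k M) = f.coeff b • of' k M b := by
    rw [of'_apply, AddMonoidAlgebra.smul_single, smul_eq_mul, mul_one]
  rw [h1, smul_assoc]

lemma decE_zero_eq (x : N) (h : (decE hint x).support = ∅) : x = 0 := by
  have h2 : decE hint x = 0 := DFinsupp.support_eq_empty.mp h
  exact (LinearEquiv.map_eq_zero_iff (decE hint)).mp h2

lemma pow_of'_smul_eq_zero
    (hgr : ∀ (a : M) (c : Fin n → ℤ), ∀ x ∈ D c,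
      (AddMonoidAlgebra.of' k M a) • x ∈ D ((a : Fin n → ℤ) + c))
    (f : AddMonoidAlgebra k M) (a₁ : M) (ha₁ : a₁ ∈ f.coeff.support)
    (hmin : ∀ b ∈ f.coeff.support, toLex (a₁ : Fin n → ℤ) ≤ toLex (b : Fin n → ℤ)) :
    ∀ m : ℕ, ∀ x : N, (decE hint x).support.card ≤ m → f • x = 0 →
      (of' k M a₁) ^ m • x = 0 := by
  classical
  intro m
  induction m with
  | zero =>
    intro x hcard _
    have h1 : (decE hint x).support = ∅ :=
      Finset.card_eq_zero.mp (Nat.le_antisymm hcard (Nat.zero_le _))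
    rw [decE_zero_eq hint x h1, smul_zero]
  | succ m ih =>
    intro x hcard hfx
    by_cases hx0 : x = 0
    · rw [hx0, smul_zero]
    have hsupp : (decE hint x).support.Nonempty := by
      rw [Finset.nonempty_iff_ne_empty]
      exact fun h => hx0 (decE_zero_eq hint x h)
    obtain ⟨c₁, hc₁, hc₁min⟩ := Finset.exists_min_image ((decE hint x).support) (fun c : Fin n → ℤ => toLex c) hsupp
    -- Step A : the lowest component is killed
    have hcomp : ∀ d : Fin n → ℤ, ((decE hint (f • x) d : D d) : N)
        = ∑ b ∈ f.coeff.support, f.coeff b • (of' k M b •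
            ((decE hint x (d - (b : Fin n → ℤ)) : D _) : N)) := by
      intro d
      have e1 : decE hint (f • x)
          = ∑ b ∈ f.coeff.support, f.coeff b • decE hint (of' k M b • x) := by
        conv_lhs => rw [smul_expand f x]
        rw [map_sum]
        exact Finset.sum_congr rfl fun b _ => map_smul _ _ _
      rw [e1, DFinsupp.finset_sum_apply, AddSubmonoidClass.coe_finset_sum]
      refine Finset.sum_congr rfl fun b _ => ?_
      rw [DFinsupp.smul_apply]
      rw [Submodule.coe_smul]
      rw [decE_of'_smul_apply' hint hgr]
    have hA0 : (0 : N)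
        = ∑ b ∈ f.coeff.support, f.coeff b • (of' k M b •
            ((decE hint x (((a₁ : Fin n → ℤ) + c₁) - (b : Fin n → ℤ)) : D _) : N)) := by
      rw [← hcomp ((a₁ : Fin n → ℤ) + c₁), hfx, map_zero]
      simp
    have hA1 : (0 : N) = f.coeff a₁ • (of' k M a₁ • ((decE hint x c₁ : D c₁) : N)) := by
      rw [hA0, Finset.sum_eq_single_of_mem a₁ ha₁]
      · rw [show ((a₁ : Fin n → ℤ) + c₁) - (a₁ : Fin n → ℤ) = c₁ by abel]
      · intro b hb hneb
        have hne2 : toLex (a₁ : Fin n → ℤ) ≠ toLex (b : Fin n → ℤ) := by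
          intro h
          exact hneb (Subtype.coe_injective (toLex.injective h)).symm
        have hlt : toLex (a₁ : Fin n → ℤ) < toLex (b : Fin n → ℤ) :=
          lt_of_le_of_ne (hmin b hb) hne2
      -- index not in support
        have hni : ((a₁ : Fin n → ℤ) + c₁) - (b : Fin n → ℤ) ∉ (decE hint x).support := by
          intro hmem
          have h2 := hc₁min _ hmem
          have h3 : toLex (((a₁ : Fin n → ℤ) + c₁) - (b : Fin n → ℤ)) < toLex c₁ := by
            rw [toLex_sub, toLex_add, sub_lt_iff_lt_add, add_comm (toLex c₁)]
            exact add_lt_add_of_lt_of_le hlt le_rfl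
          exact absurd h2 (not_le.mpr h3)
        rw [DFinsupp.notMem_support_iff.mp hni]
        simp
    have hzero : of' k M a₁ • ((decE hint x c₁ : D c₁) : N) = 0 := by
      have hne : f.coeff a₁ ≠ 0 := Finsupp.mem_support_iff.mp ha₁
      have h5 := congrArg (fun y : N => (f.coeff a₁)⁻¹ • y) hA1
      simp only [smul_zero, inv_smul_smul₀ hne] at h5
      exact h5.symm
    -- Step B : support of x' strictly smaller
    set x' := of' k M a₁ • x with hx'
    have hsub : (decE hint x').support ⊆
        (((decE hint x).support.image (fun c => (a₁ : Fin n → ℤ) + c)).erase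
          ((a₁ : Fin n → ℤ) + c₁)) := by
      intro d hd
      have hd' : ((decE hint x' d : D d) : N) ≠ 0 := by
        intro h
        exact DFinsupp.mem_support_iff.mp hd (by exact_mod_cast (ZeroMemClass.coe_eq_zero).mp h)
      rw [hx', decE_of'_smul_apply' hint hgr] at hd'
      have hmem : d - (a₁ : Fin n → ℤ) ∈ (decE hint x).support := by
        rw [DFinsupp.mem_support_iff]
        intro h
        exact hd' (by rw [h, ZeroMemClass.coe_zero, smul_zero])
      refine Finset.mem_erase.mpr ⟨?_, Finset.mem_image.mpr ⟨_, hmem, by abel⟩⟩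
      intro hdeq
      apply hd'
      rw [hdeq, show ((a₁ : Fin n → ℤ) + c₁) - (a₁ : Fin n → ℤ) = c₁ by abel]
      exact hzero
    have hcard' : (decE hint x').support.card ≤ m := by
      have h1 := Finset.card_le_card hsub
      have h2 : ((a₁ : Fin n → ℤ) + c₁) ∈
          (decE hint x).support.image (fun c => (a₁ : Fin n → ℤ) + c) :=
        Finset.mem_image.mpr ⟨c₁, hc₁, rfl⟩
      rw [Finset.card_erase_of_mem h2] at h1
      have h3 := Finset.card_image_le (s := (decE hint x).support)
        (f := fun c => (a₁ : Fin n → ℤ) + c)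
      omega
    have hfx' : f • x' = 0 := by
      rw [hx', ← mul_smul, mul_comm, mul_smul, hfx, smul_zero]
    have hmain := ih x' hcard' hfx'
    rw [pow_succ, mul_smul]
    exact hmain


include hint in
lemma monomial_mem
    (hgr : ∀ (a : M) (c : Fin n → ℤ), ∀ x ∈ D c,
      (AddMonoidAlgebra.of' k M a) • x ∈ D ((a : Fin n → ℤ) + c))
    (p : Ideal (AddMonoidAlgebra k M)) (hp : p.IsPrime) (x₀ : N)
    (hpx : p = (Submodule.span (AddMonoidAlgebra k M) {x₀}).annihilator) :
    ∀ f ∈ p, ∀ a ∈ f.coeff.support, of' k M a ∈ p := by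
  classical
  suffices H : ∀ m : ℕ, ∀ f : AddMonoidAlgebra k M, f.coeff.support.card ≤ m → f ∈ p →
      ∀ a ∈ f.coeff.support, of' k M a ∈ p by
    intro f hf a ha
    exact H f.coeff.support.card f le_rfl hf a ha
  intro m
  induction m with
  | zero =>
    intro f hcard _ a ha
    rw [Finset.card_eq_zero.mp (Nat.le_antisymm hcard (Nat.zero_le _))] at ha
    exact absurd ha (Finset.notMem_empty a)
  | succ m ih =>
    intro f hcard hf a ha
    obtain ⟨a₁, ha₁, hmin⟩ := Finset.exists_min_image f.coeff.support
      (fun b : M => toLex (b : Fin n → ℤ)) ⟨a, ha⟩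
    have hf0 : f • x₀ = 0 := by
      rw [hpx] at hf
      exact (Submodule.mem_annihilator_span_singleton x₀ f).mp hf
    have hpow := pow_of'_smul_eq_zero hint hgr f a₁ ha₁ hmin
      ((decE hint x₀).support.card) x₀ le_rfl hf0
    have h1 : of' k M a₁ ∈ p := by
      have h2 : (of' k M a₁) ^ ((decE hint x₀).support.card + 1) • x₀ = 0 := by
        rw [pow_succ', mul_smul, hpow, smul_zero]
      have h3 : (of' k M a₁) ^ ((decE hint x₀).support.card + 1) ∈ p := by
        rw [hpx]
        exact (Submodule.mem_annihilator_span_singleton x₀ _).mpr h2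
      exact hp.mem_of_pow_mem _ h3
    by_cases haa : a = a₁
    · rwa [haa]
    · have hsingle : AddMonoidAlgebra.single a₁ (f.coeff a₁)
          = AddMonoidAlgebra.single (0 : M) (f.coeff a₁) * of' k M a₁ := by
        rw [of'_apply, AddMonoidAlgebra.single_mul_single, zero_add, mul_one]
      have hfe : (AddMonoidAlgebra.erase a₁ f : AddMonoidAlgebra k M) ∈ p := by
        have he : (AddMonoidAlgebra.erase a₁ f : AddMonoidAlgebra k M)
            = f - AddMonoidAlgebra.single a₁ (f.coeff a₁) :=
          eq_sub_of_add_eq (AddMonoidAlgebra.erase_add_single a₁ f)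
        rw [he, hsingle]
        exact Ideal.sub_mem p hf (Ideal.mul_mem_left _ _ h1)
      have hacard : (AddMonoidAlgebra.erase a₁ f).coeff.support.card ≤ m := by
        rw [AddMonoidAlgebra.coeff_erase, Finsupp.support_erase, Finset.card_erase_of_mem ha₁]
        omega
      exact ih _ hacard hfe a
        (by rw [AddMonoidAlgebra.coeff_erase, Finsupp.support_erase]; exact Finset.mem_erase.mpr ⟨haa, ha⟩)

end Aux

/-- Every associated prime of a nonzero finitely generated `ℤⁿ`-graded module over the affine
semigroup ring `k[M]` (with `ℤM = ℤⁿ`) is the monomial prime `p_F` of a face `F` of `M`. -/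
theorem associatedPrime_of_graded_is_facePrime
    (k : Type*) [Field k] (n : ℕ) (hn : 1 ≤ n)
    (M : AddSubmonoid (Fin n → ℤ)) (hM : M.FG)
    (hZ : AddSubgroup.closure (M : Set (Fin n → ℤ)) = ⊤)
    (N : Type*) [AddCommGroup N] [Module (AddMonoidAlgebra k M) N]
    [Module k N] [IsScalarTower k (AddMonoidAlgebra k M) N]
    [Nontrivial N] [Module.Finite (AddMonoidAlgebra k M) N]
    (D : (Fin n → ℤ) → Submodule k N)
    (hinternal : DirectSum.IsInternal D)
    (hgrading : ∀ (a : M) (c : Fin n → ℤ), ∀ x ∈ D c,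
      (AddMonoidAlgebra.of' k M a) • x ∈ D ((a : Fin n → ℤ) + c)) :
    ∀ p ∈ associatedPrimes (AddMonoidAlgebra k M) N,
      ∃ F : AddSubmonoid (Fin n → ℤ), IsFace M F ∧ p = facePrime k M F := by
  classical
  intro p hp
  have : AddMonoid.FG M := (AddMonoid.fg_iff_addSubmonoid_fg M).mpr hM
  have : IsNoetherianRing (AddMonoidAlgebra k M) := Algebra.FiniteType.isNoetherianRing k _
  obtain ⟨hprime, x₀, hpx'⟩ := isAssociatedPrime_iff.mp hp
  have hpx : p = (Submodule.span (AddMonoidAlgebra k M) {x₀}).annihilator := by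
    refine hpx'.trans ?_
    ext f
    simp [Submodule.mem_colon]
  have hmono : ∀ f ∈ p, ∀ a ∈ f.coeff.support, AddMonoidAlgebra.of' k M a ∈ p :=
    monomial_mem hinternal hgrading p hprime x₀ hpx
  have hof : ∀ v w : M, AddMonoidAlgebra.of' k M (v + w)
      = AddMonoidAlgebra.of' k M v * AddMonoidAlgebra.of' k M w := by
    intro v w
    rw [AddMonoidAlgebra.of'_apply, AddMonoidAlgebra.of'_apply, AddMonoidAlgebra.of'_apply,
      AddMonoidAlgebra.single_mul_single, mul_one]
  have hone : AddMonoidAlgebra.of' k M 0 = 1 := by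
    rw [AddMonoidAlgebra.of'_apply, AddMonoidAlgebra.one_def]
  have hS0 : (0 : Fin n → ℤ) ∈ {v | ∃ h : v ∈ M, AddMonoidAlgebra.of' k M ⟨v, h⟩ ∉ p} := by
    refine ⟨M.zero_mem, fun hc => ?_⟩
    rw [show (⟨(0 : Fin n → ℤ), M.zero_mem⟩ : M) = 0 from rfl, hone] at hc
    exact hprime.ne_top (p.eq_top_iff_one.mpr hc)
  have hSadd : ∀ {v w : Fin n → ℤ},
      v ∈ {v | ∃ h : v ∈ M, AddMonoidAlgebra.of' k M ⟨v, h⟩ ∉ p} →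
      w ∈ {v | ∃ h : v ∈ M, AddMonoidAlgebra.of' k M ⟨v, h⟩ ∉ p} →
      v + w ∈ {v | ∃ h : v ∈ M, AddMonoidAlgebra.of' k M ⟨v, h⟩ ∉ p} := by
    rintro v w ⟨hv, hv2⟩ ⟨hw, hw2⟩
    refine ⟨M.add_mem hv hw, fun hc => ?_⟩
    rw [show (⟨v + w, M.add_mem hv hw⟩ : M) = ⟨v, hv⟩ + ⟨w, hw⟩ from Subtype.ext rfl,
      hof] at hc
    exact (hprime.mem_or_mem hc).elim hv2 hw2
  set F : AddSubmonoid (Fin n → ℤ) :=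
    ⟨⟨{v | ∃ h : v ∈ M, AddMonoidAlgebra.of' k M ⟨v, h⟩ ∉ p}, hSadd⟩, hS0⟩ with hFdef
  have hmemF : ∀ v : Fin n → ℤ, v ∈ F ↔ ∃ h : v ∈ M, AddMonoidAlgebra.of' k M ⟨v, h⟩ ∉ p :=
    fun v => Iff.rfl
  refine ⟨F, ⟨fun v hv => ((hmemF v).mp hv).1, ?_⟩, ?_⟩
  · -- face condition
    intro a haM b hbM hab
    obtain ⟨hM', hnp⟩ := (hmemF _).mp hab
    have heq : AddMonoidAlgebra.of' k M ⟨a + b, hM'⟩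
        = AddMonoidAlgebra.of' k M ⟨a, haM⟩ * AddMonoidAlgebra.of' k M ⟨b, hbM⟩ := by
      rw [show (⟨a + b, hM'⟩ : M) = ⟨a, haM⟩ + ⟨b, hbM⟩ from Subtype.ext rfl, hof]
    constructor
    · exact (hmemF a).mpr ⟨haM, fun hpa => hnp (by rw [heq]; exact Ideal.mul_mem_right _ _ hpa)⟩
    · exact (hmemF b).mpr ⟨hbM, fun hpb => hnp (by rw [heq]; exact Ideal.mul_mem_left _ _ hpb)⟩
  · -- p = facePrime
    apply le_antisymm
    · intro f hf
      have h0 : f = ∑ b ∈ f.coeff.support, AddMonoidAlgebra.single b (f.coeff b) :=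
        (AddMonoidAlgebra.sum_coeff_single f).symm
      rw [h0]
      refine Ideal.sum_mem _ fun b hb => ?_
      have h1 : AddMonoidAlgebra.of' k M b ∈ p := hmono f hf b hb
      have h2 : ((b : Fin n → ℤ)) ∉ F := by
        intro hbF
        obtain ⟨hbM, hb2⟩ := (hmemF _).mp hbF
        exact hb2 (by rw [show (⟨(b : Fin n → ℤ), hbM⟩ : M) = b from Subtype.ext rfl]; exact h1)
      have h3 : AddMonoidAlgebra.of' k M b ∈ facePrime k M F :=
        Ideal.subset_span ⟨b, h2, rfl⟩
      have h4 : AddMonoidAlgebra.single b (f.coeff b)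
          = AddMonoidAlgebra.single (0 : M) (f.coeff b) * AddMonoidAlgebra.of' k M b := by
        rw [AddMonoidAlgebra.of'_apply, AddMonoidAlgebra.single_mul_single, zero_add, mul_one]
      rw [h4]
      exact Ideal.mul_mem_left _ _ h3
    · rw [facePrime, Ideal.span_le]
      rintro y ⟨a, haF, rfl⟩
      show AddMonoidAlgebra.of' k M a ∈ p
      by_contra hnp2
      exact haF ((hmemF _).mpr
        ⟨a.2, by rw [show (⟨(a : Fin n → ℤ), a.2⟩ : M) = a from Subtype.ext rfl]; exact hnp2⟩)
end

section
/- Let k be a field and M a positive affine semigroup in ℤ^n. For a ∈ M let supp(a) denote the smallest face of M containing a. Let N be a k[M]-module with a direct sum decomposition N = ⊕_{a ∈ M} N_a into k-subspaces such that t^b · N_a ⊆ N_{a+b} for all a, b ∈ M, and assume that for all a, b ∈ M with supp(a+b) = supp(a) the multiplication map N_a → N_{a+b}, x ↦ t^b · x, is bijective. Then there exists a family of k-linear maps φ_{a,b} : N_b → N_a, defined for all pairs a, b ∈ M with supp(b) ⊆ supp(a), such that: (1) if a = b + c for some c ∈ M, then φ_{a,b} is the multiplication map x ↦ t^c · x;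 (2) φ_{a,b} is bijective whenever supp(a) = supp(b); (3) φ_{a,b} ∘ φ_{b,c} = φ_{a,c} for all a, b, c ∈ M with supp(c) ⊆ supp(b) ⊆ supp(a). -/
/-- The smallest face of `M` containing `a` (for `a ∈ M`), i.e. the intersection of all faces
of `M` containing `a`. -/
def suppFace {n : ℕ} (M : AddSubmonoid (Fin n → ℤ)) (a : Fin n → ℤ) :
    AddSubmonoid (Fin n → ℤ) :=
  sInf {F | IsFace M F ∧ a ∈ F}

namespace SqfAux

variable {n : ℕ} {M : AddSubmonoid (Fin n → ℤ)}

lemma isFace_self : IsFace M M := ⟨le_rfl, fun _ ha _ hb _ => ⟨ha, hb⟩⟩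

lemma mem_suppFace {a : Fin n → ℤ} (_ : a ∈ M) : a ∈ suppFace M a := by
  simp only [suppFace, AddSubmonoid.mem_sInf, Set.mem_setOf_eq]
  exact fun _ hF => hF.2

lemma suppFace_le {a : Fin n → ℤ} {F : AddSubmonoid (Fin n → ℤ)}
    (hF : IsFace M F) (haF : a ∈ F) : suppFace M a ≤ F :=
  sInf_le ⟨hF, haF⟩

lemma isFace_suppFace {a : Fin n → ℤ} (ha : a ∈ M) : IsFace M (suppFace M a) := by
  constructor
  · exact suppFace_le isFace_self ha
  · intro x hx y hy hxy
    simp only [suppFace, AddSubmonoid.mem_sInf, Set.mem_setOf_eq] at hxy ⊢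
    constructor <;>
      · intro F hF
        have := hF.1.2 x hx y hy (hxy F hF)
        first | exact this.1 | exact this.2

lemma mem_suppFace_add_left {a b : Fin n → ℤ} (ha : a ∈ M) (hb : b ∈ M) :
    a ∈ suppFace M (a + b) :=
  ((isFace_suppFace (M.add_mem ha hb)).2 a ha b hb (mem_suppFace (M.add_mem ha hb))).1

lemma suppFace_add {a b : Fin n → ℤ} (ha : a ∈ M) (hb : b ∈ M)
    (h : suppFace M b ≤ suppFace M a) : suppFace M (a + b) = suppFace M a := by
  apply le_antisymm
  · exact suppFace_le (isFace_suppFace ha)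
      ((suppFace M a).add_mem (mem_suppFace ha) (h (mem_suppFace hb)))
  · exact suppFace_le (isFace_suppFace (M.add_mem ha hb)) (mem_suppFace_add_left ha hb)

lemma supp_add' (a b : M) (h : suppFace M ↑b ≤ suppFace M ↑a) :
    suppFace M ↑(a + b) = suppFace M ↑a :=
  suppFace_add a.2 b.2 h

variable (k : Type*) [Field k]
  {N : Type*} [AddCommGroup N] [Module (AddMonoidAlgebra k M) N]
  [Module k N] [IsScalarTower k (AddMonoidAlgebra k M) N]

noncomputable def smulL (m : M) : N →ₗ[k] N where
  toFun x := AddMonoidAlgebra.of' k M m • x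
  map_add' := smul_add _
  map_smul' c x := smul_comm _ c x

lemma of'_add_smul (a b : M) (x : N) :
    AddMonoidAlgebra.of' k M (a + b) • x =
      AddMonoidAlgebra.of' k M a • AddMonoidAlgebra.of' k M b • x := by
  rw [← mul_smul]
  congr 1
  simp [AddMonoidAlgebra.of', AddMonoidAlgebra.single_mul_single]

lemma of'_smul_comm (a b : M) (x : N) :
    AddMonoidAlgebra.of' k M a • AddMonoidAlgebra.of' k M b • x =
      AddMonoidAlgebra.of' k M b • AddMonoidAlgebra.of' k M a • x := by
  rw [← mul_smul, ← mul_smul, mul_comm]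

variable (D : M → Submodule k N)

noncomputable def mulMap
    (hmul : ∀ (a b : M), ∀ x ∈ D a, AddMonoidAlgebra.of' k M b • x ∈ D (a + b))
    (a b : M) : D a →ₗ[k] D (a + b) :=
  LinearMap.codRestrict (D (a + b)) ((smulL k b).comp (D a).subtype)
    (fun x => hmul a b x x.2)

@[simp] lemma mulMap_coe (a b : M) (x : D a) :
    (mulMap k D hmul a b x : N) = AddMonoidAlgebra.of' k M b • (x : N) := rfl

lemma mulMap_bijective
    (hmul : ∀ (a b : M), ∀ x ∈ D a, AddMonoidAlgebra.of' k M b • x ∈ D (a + b))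
    (hbij : ∀ a b : M, suppFace M ↑(a + b) = suppFace M ↑a →
      Function.Bijective (fun x : D a =>
        (⟨AddMonoidAlgebra.of' k M b • (x : N), hmul a b x x.2⟩ : D (a + b))))
    (a b : M) (h : suppFace M ↑(a + b) = suppFace M ↑a) :
    Function.Bijective (mulMap k D hmul a b) := hbij a b h

lemma smul_inj
    (hmul : ∀ (a b : M), ∀ x ∈ D a, AddMonoidAlgebra.of' k M b • x ∈ D (a + b))
    (hbij : ∀ a b : M, suppFace M ↑(a + b) = suppFace M ↑a →
      Function.Bijective (fun x : D a =>
        (⟨AddMonoidAlgebra.of' k M b • (x : N), hmul a b x x.2⟩ : D (a + b))))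
    (a b : M) (h : suppFace M ↑b ≤ suppFace M ↑a) {z w : D a}
    (hzw : AddMonoidAlgebra.of' k M b • (z : N) = AddMonoidAlgebra.of' k M b • (w : N)) :
    z = w :=
  (mulMap_bijective k D hmul hbij a b (supp_add' a b h)).1 (Subtype.ext hzw)

noncomputable def iso
    (hmul : ∀ (a b : M), ∀ x ∈ D a, AddMonoidAlgebra.of' k M b • x ∈ D (a + b))
    (hbij : ∀ a b : M, suppFace M ↑(a + b) = suppFace M ↑a →
      Function.Bijective (fun x : D a =>
        (⟨AddMonoidAlgebra.of' k M b • (x : N), hmul a b x x.2⟩ : D (a + b))))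
    (a b : M) (h : suppFace M ↑(a + b) = suppFace M ↑a) :
    D a ≃ₗ[k] D (a + b) :=
  LinearEquiv.ofBijective (mulMap k D hmul a b) (mulMap_bijective k D hmul hbij a b h)

noncomputable def phi
    (hmul : ∀ (a b : M), ∀ x ∈ D a, AddMonoidAlgebra.of' k M b • x ∈ D (a + b))
    (hbij : ∀ a b : M, suppFace M ↑(a + b) = suppFace M ↑a →
      Function.Bijective (fun x : D a =>
        (⟨AddMonoidAlgebra.of' k M b • (x : N), hmul a b x x.2⟩ : D (a + b))))
    (a b : M) (h : suppFace M ↑b ≤ suppFace M ↑a) : D b →ₗ[k] D a :=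
  (iso k D hmul hbij a b (supp_add' a b h)).symm.toLinearMap ∘ₗ
    (LinearEquiv.ofEq (D (b + a)) (D (a + b)) (congrArg D (add_comm b a))).toLinearMap ∘ₗ
    mulMap k D hmul b a

lemma phi_char
    (hmul : ∀ (a b : M), ∀ x ∈ D a, AddMonoidAlgebra.of' k M b • x ∈ D (a + b))
    (hbij : ∀ a b : M, suppFace M ↑(a + b) = suppFace M ↑a →
      Function.Bijective (fun x : D a =>
        (⟨AddMonoidAlgebra.of' k M b • (x : N), hmul a b x x.2⟩ : D (a + b))))
    (a b : M) (h : suppFace M ↑b ≤ suppFace M ↑a) (x : D b) :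
    AddMonoidAlgebra.of' k M b • ((phi k D hmul hbij a b h x : N)) =
      AddMonoidAlgebra.of' k M a • (x : N) := by
  have h1 : mulMap k D hmul a b (phi k D hmul hbij a b h x) =
      (LinearEquiv.ofEq (D (b + a)) (D (a + b)) (congrArg D (add_comm b a)))
        (mulMap k D hmul b a x) := by
    simpa [phi, iso] using
      (iso k D hmul hbij a b (supp_add' a b h)).apply_symm_apply
        ((LinearEquiv.ofEq (D (b + a)) (D (a + b)) (congrArg D (add_comm b a)))
          (mulMap k D hmul b a x))
  have h2 := congrArg (Subtype.val) h1
  simpa using h2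

lemma phi_spec1
    (hmul : ∀ (a b : M), ∀ x ∈ D a, AddMonoidAlgebra.of' k M b • x ∈ D (a + b))
    (hbij : ∀ a b : M, suppFace M ↑(a + b) = suppFace M ↑a →
      Function.Bijective (fun x : D a =>
        (⟨AddMonoidAlgebra.of' k M b • (x : N), hmul a b x x.2⟩ : D (a + b))))
    (a b c : M) (h : suppFace M ↑b ≤ suppFace M ↑a) (hac : a = b + c) (x : D b) :
    ((phi k D hmul hbij a b h x : N)) = AddMonoidAlgebra.of' k M c • (x : N) := by
  subst hac
  have hw : AddMonoidAlgebra.of' k M c • (x : N) ∈ D (b + c) := hmul b c x x.2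
  have key : AddMonoidAlgebra.of' k M b • ((phi k D hmul hbij (b + c) b h x : N)) =
      AddMonoidAlgebra.of' k M b •
        ((⟨AddMonoidAlgebra.of' k M c • (x : N), hw⟩ : D (b + c)) : N) := by
    rw [phi_char k D hmul hbij (b + c) b h x]
    exact of'_add_smul k b c (x : N)
  exact congrArg Subtype.val (smul_inj k D hmul hbij (b + c) b h key)

lemma phi_bij
    (hmul : ∀ (a b : M), ∀ x ∈ D a, AddMonoidAlgebra.of' k M b • x ∈ D (a + b))
    (hbij : ∀ a b : M, suppFace M ↑(a + b) = suppFace M ↑a →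
      Function.Bijective (fun x : D a =>
        (⟨AddMonoidAlgebra.of' k M b • (x : N), hmul a b x x.2⟩ : D (a + b))))
    (a b : M) (h : suppFace M ↑b ≤ suppFace M ↑a) (heq : suppFace M ↑a = suppFace M ↑b) :
    Function.Bijective (phi k D hmul hbij a b h) := by
  have hcoe : ⇑(phi k D hmul hbij a b h) =
      ⇑(iso k D hmul hbij a b (supp_add' a b h)).symm ∘
        ⇑(LinearEquiv.ofEq (D (b + a)) (D (a + b)) (congrArg D (add_comm b a))) ∘
        ⇑(mulMap k D hmul b a) := rfl
  rw [hcoe]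
  exact (iso k D hmul hbij a b (supp_add' a b h)).symm.bijective.comp
    (((LinearEquiv.ofEq (D (b + a)) (D (a + b)) (congrArg D (add_comm b a))).bijective).comp
      (mulMap_bijective k D hmul hbij b a (supp_add' b a heq.le)))

lemma phi_comp
    (hmul : ∀ (a b : M), ∀ x ∈ D a, AddMonoidAlgebra.of' k M b • x ∈ D (a + b))
    (hbij : ∀ a b : M, suppFace M ↑(a + b) = suppFace M ↑a →
      Function.Bijective (fun x : D a =>
        (⟨AddMonoidAlgebra.of' k M b • (x : N), hmul a b x x.2⟩ : D (a + b))))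
    (a b c : M) (hab : suppFace M ↑b ≤ suppFace M ↑a) (hbc : suppFace M ↑c ≤ suppFace M ↑b) :
    (phi k D hmul hbij a b hab).comp (phi k D hmul hbij b c hbc) =
      phi k D hmul hbij a c (hbc.trans hab) := by
  apply LinearMap.ext
  intro x
  have hle : suppFace M ↑(b + c) ≤ suppFace M ↑a := by
    rw [supp_add' b c hbc]; exact hab
  apply smul_inj k D hmul hbij a (b + c) hle
  set y := phi k D hmul hbij b c hbc x with hy
  set z := phi k D hmul hbij a b hab y with hz
  set w := phi k D hmul hbij a c (hbc.trans hab) x with hwdef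
  show AddMonoidAlgebra.of' k M (b + c) • (z : N) = AddMonoidAlgebra.of' k M (b + c) • (w : N)
  have hbczbc : b + c = c + b := add_comm b c
  calc AddMonoidAlgebra.of' k M (b + c) • (z : N)
      = AddMonoidAlgebra.of' k M c • AddMonoidAlgebra.of' k M b • (z : N) := by
        rw [hbczbc, of'_add_smul]
    _ = AddMonoidAlgebra.of' k M c • AddMonoidAlgebra.of' k M a • (y : N) := by
        rw [phi_char k D hmul hbij a b hab y]
    _ = AddMonoidAlgebra.of' k M a • AddMonoidAlgebra.of' k M c • (y : N) :=
        of'_smul_comm k c a _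
    _ = AddMonoidAlgebra.of' k M a • AddMonoidAlgebra.of' k M b • (x : N) := by
        rw [phi_char k D hmul hbij b c hbc x]
    _ = AddMonoidAlgebra.of' k M b • AddMonoidAlgebra.of' k M a • (x : N) :=
        of'_smul_comm k a b _
    _ = AddMonoidAlgebra.of' k M b • AddMonoidAlgebra.of' k M c • (w : N) := by
        rw [phi_char k D hmul hbij a c (hbc.trans hab) x]
    _ = AddMonoidAlgebra.of' k M (b + c) • (w : N) := by
        rw [of'_add_smul]

end SqfAux

/-- For an `M`-graded module `N = ⊕_{a ∈ M} N_a` over `k[M]` such that multiplication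
`N_a → N_{a+b}` is bijective whenever `supp(a+b) = supp(a)`, there is a compatible family of
`k`-linear maps `φ_{a,b} : N_b → N_a` for all `a, b ∈ M` with `supp(b) ⊆ supp(a)`. -/
theorem squarefree_module_maps
    (k : Type*) [Field k] (n : ℕ) (hn : 1 ≤ n)
    (M : AddSubmonoid (Fin n → ℤ)) (hM : M.FG)
    (hpos : ∀ a ∈ M, -a ∈ M → a = 0)
    (N : Type*) [AddCommGroup N] [Module (AddMonoidAlgebra k M) N]
    [Module k N] [IsScalarTower k (AddMonoidAlgebra k M) N]
    (D : M → Submodule k N)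
    (hinternal : DirectSum.IsInternal D)
    (hmul : ∀ (a b : M), ∀ x ∈ D a, AddMonoidAlgebra.of' k M b • x ∈ D (a + b))
    (hbij : ∀ a b : M, suppFace M ↑(a + b) = suppFace M ↑a →
      Function.Bijective (fun x : D a =>
        (⟨AddMonoidAlgebra.of' k M b • (x : N), hmul a b x x.2⟩ : D (a + b)))) :
    ∃ φ : ∀ a b : M, suppFace M ↑b ≤ suppFace M ↑a → (D b →ₗ[k] D a),
      (∀ (a b c : M) (h : suppFace M ↑b ≤ suppFace M ↑a), a = b + c →
        ∀ x : D b, ((φ a b h) x : N) = AddMonoidAlgebra.of' k M c • (x : N)) ∧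
      (∀ (a b : M) (h : suppFace M ↑b ≤ suppFace M ↑a), suppFace M ↑a = suppFace M ↑b →
        Function.Bijective (φ a b h)) ∧
      (∀ (a b c : M) (hab : suppFace M ↑b ≤ suppFace M ↑a)
        (hbc : suppFace M ↑c ≤ suppFace M ↑b),
        (φ a b hab).comp (φ b c hbc) = φ a c (hbc.trans hab)) := by

  exact ⟨fun a b h => SqfAux.phi k D hmul hbij a b h,
    fun a b c h hac x => SqfAux.phi_spec1 k D hmul hbij a b c h hac x,
    fun a b h heq => SqfAux.phi_bij k D hmul hbij a b h heq,
    fun a b c hab hbc => SqfAux.phi_comp k D hmul hbij a b c hab hbc⟩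
end
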